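/- With high probability (probability tending to 1 as n → ∞), the maximum size of a (b/a)-multiple-free subset of the random set [n]_p equals (b/(b+p))·p·n + O(√(pn)·log n·log log n). -/

import Mathlib

open MeasureTheory Finset
open scoped Classical

/-- The Bernoulli(p) measure on `Bool`. -/
noncomputable def bern (p : ℝ) : Measure Bool :=
  ENNReal.ofReal p • Measure.dirac true + ENNReal.ofReal (1 - p) • Measure.dirac false

/-- The law of the random subset `[n]_p`, as the product of `n` Bernoulli(p) measures. -/
noncomputable def randMeasure (n : ℕ) (p : ℝ) : Measure (Fin n → Bool) :=
  Measure.pi fun _ => bern p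

/-- The realization of the random subset `[n]_p ⊆ {1,...,n}` from a sample `ω`. -/
noncomputable def randSet (n : ℕ) (ω : Fin n → Bool) : Finset ℕ :=
  (Finset.univ.filter fun i : Fin n => ω i = true).image fun i => (i : ℕ) + 1

/-- `k` is an `i`-th subpower of `b` if `k = b^i · l` with `b ∤ l`. -/
def isSubpower (b i k : ℕ) : Prop := ∃ l : ℕ, k = b ^ i * l ∧ ¬ b ∣ l

/-- `v` lies in `S` at even distance from the smallest vertex of its component in the
subgraph of `D` induced on `S`, where `D` has arcs `(x,y)` with `b*x = a*y`:
there is a directed path `c 0 → ⋯ → c k = v` of even length inside `S` such that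
`c 0` has no in-neighbour inside `S`. -/
def evenDist (a b : ℕ) (S : Finset ℕ) (v : ℕ) : Prop :=
  ∃ (k : ℕ) (c : Fin (k + 1) → ℕ), Even k ∧ c (Fin.last k) = v ∧
    (∀ i, c i ∈ S) ∧
    (∀ i : Fin k, b * c i.castSucc = a * c i.succ) ∧
    ∀ u : ℕ, b * u = a * c 0 → u ∉ S

/-- `|T*_i|`: the number of `i`-th subpowers of `b` in `S = [n]_p` lying at even
distance from the smallest vertex of their component in `D[S]`. -/
noncomputable def TstarCard (a b n i : ℕ) (S : Finset ℕ) : ℕ :=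
  ((Finset.Icc 1 n).filter fun v => isSubpower b i v ∧ evenDist a b S v).card

/-- The maximum size of a `(b/a)`-multiple-free subset of `S`. -/
noncomputable def maxMulFree (a b : ℕ) (S : Finset ℕ) : ℕ :=
  (S.powerset.filter fun A => ∀ x ∈ A, ∀ y ∈ A, b * x ≠ a * y).sup Finset.card


section Anc
lemma par_lt {a b v : ℕ} (hv : 0 < v) (hd : b ∣ v) (ha : 0 < a) (hab : a < b) :
    a * v / b < v := by
  have hb : 0 < b := lt_trans ha hab
  calc a * v / b < b * v / b := by
        apply Nat.div_lt_div_of_lt_of_dvd (Dvd.dvd.mul_left hd b)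
        exact (Nat.mul_lt_mul_right hv).mpr hab
    _ = v := Nat.mul_div_cancel_left v hb

variable (a b : ℕ)

def runLen (S : Finset ℕ) (v : ℕ) : ℕ :=
  if h : 0 < v ∧ b ∣ v ∧ a * v / b ∈ S ∧ 0 < a ∧ a < b then
    runLen S (a * v / b) + 1
  else 1
  decreasing_by exact par_lt h.1 h.2.1 h.2.2.2.1 h.2.2.2.2

def anc (v : ℕ) : Finset ℕ :=
  if _h : 0 < v ∧ b ∣ v ∧ 0 < a ∧ a < b then
    insert v (anc (a * v / b))
  else {v}
  decreasing_by exact par_lt _h.1 _h.2.1 _h.2.2.1 _h.2.2.2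

noncomputable def qv (p : ℝ) (v : ℕ) : ℝ :=
  if _h : 0 < v ∧ b ∣ v ∧ 0 < a ∧ a < b then
    p * (1 - qv p (a * v / b))
  else p
  decreasing_by exact par_lt _h.1 _h.2.1 _h.2.2.1 _h.2.2.2

variable {a b}

lemma runLen_guard (ha : 0 < a) (hab : a < b) {S : Finset ℕ} {v : ℕ} (hv : 0 < v) (hd : b ∣ v)
    (hp : a * v / b ∈ S) : runLen a b S v = runLen a b S (a * v / b) + 1 := by
  rw [runLen]; simp [hv, hd, hp, ha, hab]

lemma runLen_no_guard {S : Finset ℕ} {v : ℕ} (h : ¬(0 < v ∧ b ∣ v ∧ a * v / b ∈ S)) :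
    runLen a b S v = 1 := by
  rw [runLen]; rw [dif_neg]; tauto

lemma odd_runLen_iff (ha : 0 < a) (hab : a < b) {S : Finset ℕ} {v : ℕ} (hv : 0 < v) :
    Odd (runLen a b S v) ↔
      ¬(b ∣ v ∧ a * v / b ∈ S ∧ Odd (runLen a b S (a * v / b))) := by
  by_cases hg : b ∣ v ∧ a * v / b ∈ S
  · rw [runLen_guard ha hab hv hg.1 hg.2, Nat.odd_add_one]; tauto
  · rw [runLen_no_guard (by tauto)]
    simp only [odd_one, true_iff]; tauto

lemma self_mem_anc (v : ℕ) : v ∈ anc a b v := by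
  rw [anc]; split <;> simp

lemma anc_guard (ha : 0 < a) (hab : a < b) {v : ℕ} (hv : 0 < v) (hd : b ∣ v) :
    anc a b v = insert v (anc a b (a * v / b)) := by
  rw [anc]; rw [dif_pos ⟨hv, hd, ha, hab⟩]

lemma anc_no_guard {v : ℕ} (h : ¬(0 < v ∧ b ∣ v ∧ 0 < a ∧ a < b)) :
    anc a b v = {v} := by
  rw [anc]; rw [dif_neg h]

lemma par_pos {a b v : ℕ} (hv : 0 < v) (hd : b ∣ v) (ha : 0 < a) (hab : a < b) :
    0 < a * v / b := by
  have hb : 0 < b := lt_trans ha hab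
  apply Nat.div_pos _ hb
  calc b ≤ v := Nat.le_of_dvd hv hd
    _ ≤ a * v := Nat.le_mul_of_pos_left v ha

lemma mem_anc_le {v u : ℕ} (h : u ∈ anc a b v) : u ≤ v := by
  induction v using Nat.strong_induction_on with
  | _ v ih =>
    by_cases hg : 0 < v ∧ b ∣ v ∧ 0 < a ∧ a < b
    · rw [anc_guard hg.2.2.1 hg.2.2.2 hg.1 hg.2.1] at h
      rcases Finset.mem_insert.mp h with h | h
      · omega
      · have hlt := par_lt hg.1 hg.2.1 hg.2.2.1 hg.2.2.2
        exact le_trans (ih _ hlt h) (le_of_lt hlt)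
    · rw [anc_no_guard hg] at h
      simp at h; omega

lemma mem_anc_pos {v u : ℕ} (hv : 0 < v) (h : u ∈ anc a b v) : 0 < u := by
  induction v using Nat.strong_induction_on with
  | _ v ih =>
    by_cases hg : 0 < v ∧ b ∣ v ∧ 0 < a ∧ a < b
    · rw [anc_guard hg.2.2.1 hg.2.2.2 hg.1 hg.2.1] at h
      rcases Finset.mem_insert.mp h with h | h
      · omega
      · exact ih _ (par_lt hg.1 hg.2.1 hg.2.2.1 hg.2.2.2)
          (par_pos hg.1 hg.2.1 hg.2.2.1 hg.2.2.2) h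
    · rw [anc_no_guard hg] at h
      simp at h; omega

lemma mem_anc_exists (ha : 0 < a) (hab : a < b) {v u : ℕ} (hv : 0 < v) (h : u ∈ anc a b v) :
    ∃ j : ℕ, v * a ^ j = u * b ^ j := by
  induction v using Nat.strong_induction_on with
  | _ v ih =>
    by_cases hg : b ∣ v
    · rw [anc_guard ha hab hv hg] at h
      rcases Finset.mem_insert.mp h with h | h
      · exact ⟨0, by simp [h]⟩
      · obtain ⟨j, hj⟩ := ih _ (par_lt hv hg ha hab) (par_pos hv hg ha hab) h
        refine ⟨j + 1, ?_⟩
        have hb : 0 < b := lt_trans ha hab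
        have hkey : b * (a * v / b) = a * v :=
          Nat.mul_div_cancel' (Dvd.dvd.mul_left hg a)
        calc v * a ^ (j + 1) = a * v * a ^ j := by ring
          _ = b * (a * v / b) * a ^ j := by rw [hkey]
          _ = b * ((a * v / b) * a ^ j) := by ring
          _ = b * (u * b ^ j) := by rw [hj]
          _ = u * b ^ (j + 1) := by ring
    · rw [anc_no_guard (by tauto)] at h
      simp at h
      exact ⟨0, by simp [h]⟩

lemma runLen_congr (ha : 0 < a) (hab : a < b) {S T : Finset ℕ} {v : ℕ}
    (h : ∀ u ∈ anc a b v, (u ∈ S ↔ u ∈ T)) : runLen a b S v = runLen a b T v := by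
  induction v using Nat.strong_induction_on with
  | _ v ih =>
    by_cases hg : 0 < v ∧ b ∣ v
    · have hpar : a * v / b ∈ anc a b v := by
        rw [anc_guard ha hab hg.1 hg.2]
        exact Finset.mem_insert_of_mem (self_mem_anc _)
      have hsub : ∀ u ∈ anc a b (a * v / b), (u ∈ S ↔ u ∈ T) := by
        intro u hu
        apply h
        rw [anc_guard ha hab hg.1 hg.2]
        exact Finset.mem_insert_of_mem hu
      by_cases hpS : a * v / b ∈ S
      · have hpT : a * v / b ∈ T := (h _ hpar).mp hpS
        rw [runLen_guard ha hab hg.1 hg.2 hpS, runLen_guard ha hab hg.1 hg.2 hpT]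
        rw [ih _ (par_lt hg.1 hg.2 ha hab) hsub]
      · have hpT : a * v / b ∉ T := fun hT => hpS ((h _ hpar).mpr hT)
        rw [runLen_no_guard (by tauto), runLen_no_guard (by tauto)]
    · rw [runLen_no_guard (by tauto), runLen_no_guard (by tauto)]

end Anc

section Structural

variable {a b : ℕ}

theorem maxMulFree_eq (ha : 0 < a) (hab : a < b) (hco : Nat.Coprime a b) (S : Finset ℕ) (hS : ∀ v ∈ S, 0 < v) :
    maxMulFree a b S = (S.filter fun v => Odd (runLen a b S v)).card := by
  have hb : 0 < b := lt_trans ha hab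
  set W := S.filter fun v => Odd (runLen a b S v) with hW
  -- the parent identity
  have key : ∀ x y : ℕ, 0 < y → b * x = a * y → b ∣ y ∧ a * y / b = x := by
    intro x y hy hxy
    have hdvd : b ∣ a * y := ⟨x, hxy.symm⟩
    have hby : b ∣ y := (Nat.Coprime.dvd_of_dvd_mul_left (hco.symm) hdvd)
    refine ⟨hby, ?_⟩
    rw [← hxy, Nat.mul_div_cancel_left x hb]
  apply le_antisymm
  · -- upper bound : every admissible A has card ≤ W.card
    apply Finset.sup_le
    intro A hA
    simp only [Finset.mem_filter, Finset.mem_powerset] at hA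
    obtain ⟨hAS, hfree⟩ := hA
    set φ : ℕ → ℕ := fun v => if Odd (runLen a b S v) then v else a * v / b with hφ
    -- for even run length, the guard holds
    have hguard : ∀ v ∈ A, ¬ Odd (runLen a b S v) →
        (b ∣ v ∧ a * v / b ∈ S ∧ Odd (runLen a b S (a * v / b))) := by
      intro v hv hodd
      have hv0 : 0 < v := hS v (hAS hv)
      by_contra hg
      exact hodd ((odd_runLen_iff ha hab hv0).mpr hg)
    apply Finset.card_le_card_of_injOn φ
    · intro v hv
      by_cases hodd : Odd (runLen a b S v)
      · simp only [hφ, if_pos hodd]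
        exact Finset.mem_filter.mpr ⟨hAS hv, hodd⟩
      · obtain ⟨hd, hpS, hpodd⟩ := hguard v hv hodd
        simp only [hφ, if_neg hodd]
        exact Finset.mem_filter.mpr ⟨hpS, hpodd⟩
    · intro u hu v hv huv
      simp only [Finset.mem_coe] at hu hv
      simp only [hφ] at huv
      by_cases hou : Odd (runLen a b S u) <;> by_cases hov : Odd (runLen a b S v)
      · simpa [if_pos hou, if_pos hov] using huv
      · exfalso
        rw [if_pos hou, if_neg hov] at huv
        obtain ⟨hd, hpS, _⟩ := hguard v hv hov
        have : b * u = a * v := by rw [huv, Nat.mul_div_cancel' (Dvd.dvd.mul_left hd a)]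
        exact hfree u hu v hv this
      · exfalso
        rw [if_neg hou, if_pos hov] at huv
        obtain ⟨hd, hpS, _⟩ := hguard u hu hou
        have : b * v = a * u := by rw [← huv, Nat.mul_div_cancel' (Dvd.dvd.mul_left hd a)]
        exact hfree v hv u hu this
      · rw [if_neg hou, if_neg hov] at huv
        obtain ⟨hdu, _, _⟩ := hguard u hu hou
        obtain ⟨hdv, _, _⟩ := hguard v hv hov
        rw [Nat.mul_div_assoc a hdu, Nat.mul_div_assoc a hdv] at huv
        have h2 : u / b = v / b := Nat.eq_of_mul_eq_mul_left ha huv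
        rw [← Nat.div_mul_cancel hdu, ← Nat.div_mul_cancel hdv, h2]
  · -- lower bound : W is admissible
    apply Finset.le_sup (f := Finset.card)
    simp only [Finset.mem_filter, Finset.mem_powerset]
    refine ⟨Finset.filter_subset _ _, ?_⟩
    intro x hx y hy hxy
    rw [hW, Finset.mem_filter] at hx hy
    obtain ⟨hxS, hxodd⟩ := hx
    obtain ⟨hyS, hyodd⟩ := hy
    obtain ⟨hby, hpar⟩ := key x y (hS y hyS) hxy
    have := runLen_guard ha hab (hS y hyS) hby (hpar ▸ hxS)
    rw [this, hpar, Nat.odd_add_one] at hyodd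
    exact hyodd hxodd

end Structural

section Prob
variable (n : ℕ) (p : ℝ)

/-- Weight of an atom. -/
def wgt (ω : Fin n → Bool) : ℝ := ∏ i, if ω i then p else 1 - p

/-- Expectation as a finite sum. -/
noncomputable def Ex (f : (Fin n → Bool) → ℝ) : ℝ := ∑ ω, wgt n p ω * f ω

/-- Indicator function of an event. -/
noncomputable def ind (E : Set (Fin n → Bool)) (ω : Fin n → Bool) : ℝ :=
  if ω ∈ E then 1 else 0

variable {p}

lemma wgt_nonneg (hp0 : 0 ≤ p) (hp1 : p ≤ 1) (ω : Fin n → Bool) : 0 ≤ wgt n p ω :=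
  Finset.prod_nonneg fun i _ => by
    by_cases h : ω i <;> simp [h, hp0, hp1, sub_nonneg]

lemma sum_wgt : ∑ ω : Fin n → Bool, wgt n p ω = 1 := by
  have := Finset.prod_univ_sum (fun _ : Fin n => (Finset.univ : Finset Bool))
    (fun _ x => if x then p else 1 - p)
  rw [Fintype.piFinset_univ] at this
  simp only [wgt]
  rw [← this]
  simp

instance : IsFiniteMeasure (bern p) := by
  constructor
  rw [bern]
  simp only [Measure.coe_add, Measure.smul_apply, Pi.add_apply, smul_eq_mul, measure_univ,
    mul_one]
  exact ENNReal.add_lt_top.mpr ⟨ENNReal.ofReal_lt_top, ENNReal.ofReal_lt_top⟩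

lemma bern_singleton (hp0 : 0 ≤ p) (x : Bool) :
    bern p {x} = ENNReal.ofReal (if x then p else 1 - p) := by
  rw [bern]
  cases x <;>
    simp [Measure.dirac_apply, Set.indicator_apply]

lemma randMeasure_singleton (hp0 : 0 ≤ p) (hp1 : p ≤ 1) (ω : Fin n → Bool) :
    randMeasure n p {ω} = ENNReal.ofReal (wgt n p ω) := by
  rw [← Set.univ_pi_singleton ω, randMeasure, Measure.pi_pi]
  rw [wgt, ENNReal.ofReal_prod_of_nonneg]
  · exact Finset.prod_congr rfl fun i _ => bern_singleton hp0 (ω i)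
  · intro i _
    by_cases h : ω i <;> simp [h, hp0, hp1, sub_nonneg]

lemma randMeasure_apply (hp0 : 0 ≤ p) (hp1 : p ≤ 1) (E : Set (Fin n → Bool)) :
    randMeasure n p E = ENNReal.ofReal (Ex n p (ind n E)) := by
  have hE : E = ⋃ ω ∈ Finset.univ.filter (· ∈ E), ({ω} : Set (Fin n → Bool)) := by
    ext ω; simp
  conv_lhs => rw [hE]
  rw [measure_biUnion_finset]
  · have : Ex n p (ind n E) = ∑ ω ∈ Finset.univ.filter (· ∈ E), wgt n p ω := by
      rw [Ex, Finset.sum_filter]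
      apply Finset.sum_congr rfl
      intro ω _
      by_cases h : ω ∈ E <;> simp [ind, h]
    rw [this, ENNReal.ofReal_sum_of_nonneg fun ω _ => wgt_nonneg n hp0 hp1 ω]
    exact Finset.sum_congr rfl fun ω _ => randMeasure_singleton n hp0 hp1 ω
  · intro x _ y _ hxy
    simp [Function.onFun, Set.disjoint_singleton, hxy]
  · exact fun ω _ => measurableSet_singleton ω

/-- The key factorization lemma: functions depending on disjoint coordinate sets
decorrelate. -/
lemma factor (I J : Finset (Fin n)) (hIJ : Disjoint I J)
    (f g : (Fin n → Bool) → ℝ)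
    (hf : ∀ ω ω', (∀ i ∈ I, ω i = ω' i) → f ω = f ω')
    (hg : ∀ ω ω', (∀ i ∈ J, ω i = ω' i) → g ω = g ω') :
    Ex n p (fun ω => f ω * g ω) = Ex n p f * Ex n p g := by
  classical
  have expand : Ex n p f * Ex n p g
      = ∑ z : (Fin n → Bool) × (Fin n → Bool),
          (wgt n p z.1 * f z.1) * (wgt n p z.2 * g z.2) := by
    rw [Ex, Ex, Finset.sum_mul_sum, ← Finset.sum_product']
    rfl
  -- the merging involution
  set m : (Fin n → Bool) → (Fin n → Bool) → (Fin n → Bool) :=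
    fun x y i => if i ∈ I then x i else y i with hm
  have hinv : Function.Involutive (fun z : (Fin n → Bool) × (Fin n → Bool) =>
      (m z.1 z.2, m z.2 z.1)) := by
    intro z
    ext i <;> by_cases h : i ∈ I <;> simp [hm, h]
  set e := hinv.toPerm _
  have he : ∀ z : (Fin n → Bool) × (Fin n → Bool), e z = (m z.1 z.2, m z.2 z.1) := fun z => rfl
  have := Equiv.sum_comp e (fun z : (Fin n → Bool) × (Fin n → Bool) =>
    (wgt n p z.1 * f z.1) * (wgt n p z.2 * g z.2))
  rw [expand, ← this]
  have step : ∀ z : (Fin n → Bool) × (Fin n → Bool),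
      (wgt n p (m z.1 z.2) * f (m z.1 z.2)) * (wgt n p (m z.2 z.1) * g (m z.2 z.1))
        = (wgt n p z.1 * wgt n p z.2) * (f z.1 * g z.1) := by
    intro z
    have hw : wgt n p (m z.1 z.2) * wgt n p (m z.2 z.1) = wgt n p z.1 * wgt n p z.2 := by
      rw [wgt, wgt, wgt, wgt, ← Finset.prod_mul_distrib, ← Finset.prod_mul_distrib]
      apply Finset.prod_congr rfl
      intro i _
      by_cases h : i ∈ I <;> simp [hm, h, mul_comm]
    have hfz : f (m z.1 z.2) = f z.1 := hf _ _ (fun i hi => by simp [hm, hi])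
    have hgz : g (m z.2 z.1) = g z.1 := by
      apply hg
      intro i hi
      have : i ∉ I := fun hI => (Finset.disjoint_left.mp hIJ hI) hi
      simp [hm, this]
    rw [hfz, hgz]
    linear_combination (f z.1 * g z.1) * hw
  calc Ex n p (fun ω => f ω * g ω)
      = ∑ ω : Fin n → Bool, wgt n p ω * (f ω * g ω) := rfl
    _ = (∑ ω : Fin n → Bool, wgt n p ω * (f ω * g ω)) * (∑ ω : Fin n → Bool, wgt n p ω) := by
        rw [sum_wgt, mul_one]
    _ = ∑ z : (Fin n → Bool) × (Fin n → Bool),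
          (wgt n p z.1 * wgt n p z.2) * (f z.1 * g z.1) := by
        rw [Finset.sum_mul_sum, ← Finset.sum_product']
        apply Finset.sum_congr rfl
        intro z _
        ring
    _ = ∑ z : (Fin n → Bool) × (Fin n → Bool),
          (wgt n p (e z).1 * f (e z).1) * (wgt n p (e z).2 * g (e z).2) := by
        apply Finset.sum_congr rfl
        intro z _
        rw [he z]
        exact (step z).symm

end Prob

section Events
variable (a b n : ℕ)

/-- The event that `v ∈ [n]_p` with odd run length. -/
def Yv (v : ℕ) : Set (Fin n → Bool) :=
  {ω | v ∈ randSet n ω ∧ Odd (runLen a b (randSet n ω) v)}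

variable {a b n}

lemma mem_randSet_le {m : ℕ} {ω : Fin n → Bool} (h : m ∈ randSet n ω) : 1 ≤ m ∧ m ≤ n := by
  rw [randSet] at h
  simp only [Finset.mem_image] at h
  simp at h
  obtain ⟨i, _, hi⟩ := h
  have := i.isLt
  omega

lemma mem_randSet_iff {m : ℕ} (h1 : 1 ≤ m) (h2 : m ≤ n) (ω : Fin n → Bool) :
    m ∈ randSet n ω ↔ ω ⟨m - 1, by omega⟩ = true := by
  rw [randSet]
  simp only [Finset.mem_image]
  simp
  constructor
  · rintro ⟨i, hw, hieq⟩
    have : i = (⟨m - 1, by omega⟩ : Fin n) := by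
      apply Fin.ext; simp; omega
    rwa [← this]
  · intro hw
    exact ⟨⟨m - 1, by omega⟩, hw, by simp; omega⟩

lemma randSet_agree (ha : 0 < a) (hab : a < b) {v : ℕ} (hv : 0 < v) (hn : v ≤ n)
    {ω ω' : Fin n → Bool} (hagree : ∀ i : Fin n, (i : ℕ) + 1 ∈ anc a b v → ω i = ω' i) :
    ∀ u ∈ anc a b v, (u ∈ randSet n ω ↔ u ∈ randSet n ω') := by
  intro u hu
  have hu1 : 1 ≤ u := mem_anc_pos hv hu
  have hu2 : u ≤ n := le_trans (mem_anc_le hu) hn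
  rw [mem_randSet_iff hu1 hu2, mem_randSet_iff hu1 hu2]
  have hcoord : ((⟨u - 1, by omega⟩ : Fin n) : ℕ) + 1 ∈ anc a b v := by
    show u - 1 + 1 ∈ anc a b v
    have : u - 1 + 1 = u := by omega
    rw [this]; exact hu
  rw [hagree _ hcoord]

lemma Yv_agree (ha : 0 < a) (hab : a < b) {v : ℕ} (hv : 0 < v) (hn : v ≤ n)
    {ω ω' : Fin n → Bool} (hagree : ∀ i : Fin n, (i : ℕ) + 1 ∈ anc a b v → ω i = ω' i) :
    (ω ∈ Yv a b n v ↔ ω' ∈ Yv a b n v) := by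
  have hmem := randSet_agree ha hab hv hn hagree
  have hrun : runLen a b (randSet n ω) v = runLen a b (randSet n ω') v := by
    apply runLen_congr ha hab
    intro u hu
    -- membership in randSet only matters for u ∈ anc v
    exact hmem u hu
  simp only [Yv, Set.mem_setOf_eq]
  rw [hrun, hmem v (self_mem_anc v)]

end Events


section ExLemmas
variable {n : ℕ} {p : ℝ}

lemma Ex_congr {f g : (Fin n → Bool) → ℝ} (h : ∀ ω, f ω = g ω) : Ex n p f = Ex n p g := by
  rw [Ex, Ex]; exact Finset.sum_congr rfl fun ω _ => by rw [h ω]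

lemma Ex_sub (f g : (Fin n → Bool) → ℝ) :
    Ex n p (fun ω => f ω - g ω) = Ex n p f - Ex n p g := by
  rw [Ex, Ex, Ex, ← Finset.sum_sub_distrib]
  exact Finset.sum_congr rfl fun ω _ => by ring

lemma Ex_sum {ι : Type*} (s : Finset ι) (F : ι → (Fin n → Bool) → ℝ) :
    Ex n p (fun ω => ∑ v ∈ s, F v ω) = ∑ v ∈ s, Ex n p (F v) := by
  rw [Ex]
  simp only [Finset.mul_sum]
  rw [Finset.sum_comm]
  rfl

lemma Ex_mono (hp0 : 0 ≤ p) (hp1 : p ≤ 1) {f g : (Fin n → Bool) → ℝ}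
    (h : ∀ ω, f ω ≤ g ω) : Ex n p f ≤ Ex n p g :=
  Finset.sum_le_sum fun ω _ => mul_le_mul_of_nonneg_left (h ω) (wgt_nonneg n hp0 hp1 ω)

lemma Ex_coord (i : Fin n) : Ex n p (fun ω => if ω i = true then 1 else 0) = p := by
  classical
  set g : Fin n → Bool → ℝ :=
    fun j x => if j = i then (if x then p else 0) else (if x then p else 1 - p) with hg
  have h1 : ∀ ω : Fin n → Bool,
      wgt n p ω * (if ω i = true then 1 else 0) = ∏ j, g j (ω j) := by
    intro ω
    by_cases hωi : ω i = true
    · rw [if_pos hωi, mul_one, wgt]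
      apply Finset.prod_congr rfl
      intro j _
      by_cases hj : j = i
      · subst hj; rw [hg]; simp [hωi]
      · rw [hg]; simp [hj]
    · rw [if_neg hωi, mul_zero]
      symm
      apply Finset.prod_eq_zero (Finset.mem_univ i)
      rw [hg]; simp [Bool.not_eq_true] at hωi ⊢; simp [hωi]
  rw [Ex]
  rw [Finset.sum_congr rfl fun ω _ => h1 ω]
  have h2 := Finset.prod_univ_sum (fun _ : Fin n => (Finset.univ : Finset Bool)) g
  rw [Fintype.piFinset_univ] at h2
  rw [← h2]
  have h3 : ∀ j : Fin n, (∑ x : Bool, g j x) = if j = i then p else 1 := by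
    intro j
    rw [Fintype.sum_bool]
    by_cases hj : j = i <;> simp [hg, hj]
  rw [Finset.prod_congr rfl fun j _ => h3 j]
  rw [Finset.prod_ite_eq' Finset.univ i (fun _ => p)]
  simp

lemma Ex_ind_le_one (hp0 : 0 ≤ p) (hp1 : p ≤ 1) (E : Set (Fin n → Bool)) :
    Ex n p (ind n E) ≤ 1 := by
  have h := Ex_mono (n := n) hp0 hp1 (f := ind n E) (g := fun _ => 1)
    (fun ω => by rw [ind]; split <;> norm_num)
  calc Ex n p (ind n E) ≤ Ex n p (fun _ => 1) := h
    _ = 1 := by rw [Ex]; simp [sum_wgt]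

lemma Ex_ind_nonneg (hp0 : 0 ≤ p) (hp1 : p ≤ 1) (E : Set (Fin n → Bool)) :
    0 ≤ Ex n p (ind n E) := by
  have h := Ex_mono (n := n) hp0 hp1 (f := fun _ => (0:ℝ)) (g := ind n E)
    (fun ω => by rw [ind]; split <;> norm_num)
  calc (0:ℝ) = Ex n p (fun _ => 0) := by rw [Ex]; simp
    _ ≤ _ := h

lemma ind_Yv_agree {a b : ℕ} (ha : 0 < a) (hab : a < b) {u : ℕ} (hu1 : 1 ≤ u) (hu2 : u ≤ n)
    {ω ω' : Fin n → Bool}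
    (h : ∀ i ∈ Finset.univ.filter (fun i : Fin n => (i : ℕ) + 1 ∈ anc a b u), ω i = ω' i) :
    ind n (Yv a b n u) ω = ind n (Yv a b n u) ω' := by
  have hiff := Yv_agree (n := n) ha hab hu1 hu2 (ω := ω) (ω' := ω')
    (fun i hi => h i (Finset.mem_filter.mpr ⟨Finset.mem_univ _, hi⟩))
  rw [ind, ind]
  by_cases hω : ω ∈ Yv a b n u
  · rw [if_pos hω, if_pos (hiff.mp hω)]
  · rw [if_neg hω, if_neg (fun hω' => hω (hiff.mpr hω'))]

lemma Ex_ind_Yv {a b : ℕ} (ha : 0 < a) (hab : a < b) (hp0 : 0 ≤ p) (hp1 : p ≤ 1) :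
    ∀ v : ℕ, 1 ≤ v → v ≤ n → Ex n p (ind n (Yv a b n v)) = qv a b p v := by
  intro v
  induction v using Nat.strong_induction_on with
  | _ v ih =>
    intro hv1 hv2
    have hv0 : 0 < v := hv1
    have hidx : v - 1 < n := by omega
    set iv : Fin n := ⟨v - 1, hidx⟩ with hiv
    have hmemv : ∀ ω : Fin n → Bool, v ∈ randSet n ω ↔ ω iv = true :=
      fun ω => mem_randSet_iff hv1 hv2 ω
    by_cases hd : b ∣ v
    · -- v has a parent u
      set u := a * v / b with hu
      have hult : u < v := par_lt hv0 hd ha hab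
      have hu1 : 1 ≤ u := par_pos hv0 hd ha hab
      have hu2 : u ≤ n := by omega
      have hqv : qv a b p v = p * (1 - qv a b p u) := by
        rw [qv, dif_pos ⟨hv0, hd, ha, hab⟩]
      -- pointwise identity
      have hident : ∀ ω : Fin n → Bool, ind n (Yv a b n v) ω
          = (if ω iv = true then (1:ℝ) else 0) * (1 - ind n (Yv a b n u) ω) := by
        intro ω
        have hodd : Odd (runLen a b (randSet n ω) v) ↔ ¬(ω ∈ Yv a b n u) := by
          rw [odd_runLen_iff ha hab hv0]
          have : (ω ∈ Yv a b n u) ↔ (u ∈ randSet n ω ∧ Odd (runLen a b (randSet n ω) u)) :=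
            Iff.rfl
          rw [this]
          constructor
          · intro hng hc; exact hng ⟨hd, hc.1, hc.2⟩
          · intro hng hc; exact hng ⟨hc.2.1, hc.2.2⟩
        have hYv : (ω ∈ Yv a b n v) ↔ (ω iv = true ∧ ¬(ω ∈ Yv a b n u)) := by
          rw [show (ω ∈ Yv a b n v) ↔ (v ∈ randSet n ω ∧ Odd (runLen a b (randSet n ω) v))
            from Iff.rfl, hmemv ω, hodd]
        rw [ind]
        by_cases h1 : ω iv = true <;> by_cases h2 : ω ∈ Yv a b n u
        · rw [if_neg (by rw [hYv]; tauto), if_pos h1, ind, if_pos h2]; ring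
        · rw [if_pos (by rw [hYv]; tauto), if_pos h1, ind, if_neg h2]; ring
        · rw [if_neg (by rw [hYv]; tauto), if_neg h1]; ring
        · rw [if_neg (by rw [hYv]; tauto), if_neg h1]; ring
      rw [Ex_congr hident]
      have hsplit : Ex n p (fun ω => (if ω iv = true then (1:ℝ) else 0) * (1 - ind n (Yv a b n u) ω))
          = Ex n p (fun ω => if ω iv = true then (1:ℝ) else 0)
            - Ex n p (fun ω => (if ω iv = true then (1:ℝ) else 0) * ind n (Yv a b n u) ω) := by
        rw [← Ex_sub]
        exact Ex_congr fun ω => by ring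
      rw [hsplit, Ex_coord]
      -- factorization
      have hfac : Ex n p (fun ω => (if ω iv = true then (1:ℝ) else 0) * ind n (Yv a b n u) ω)
          = Ex n p (fun ω => if ω iv = true then (1:ℝ) else 0) * Ex n p (ind n (Yv a b n u)) := by
        apply factor n {iv} (Finset.univ.filter (fun i : Fin n => (i : ℕ) + 1 ∈ anc a b u))
        · rw [Finset.disjoint_left]
          intro i hi hj
          rw [Finset.mem_singleton] at hi
          rw [Finset.mem_filter] at hj
          have hanc := mem_anc_le hj.2
          subst hi
          rw [hiv] at hj
          simp only [hiv, Fin.val_mk] at hanc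
          omega
        · intro ω ω' hagree
          rw [hagree iv (Finset.mem_singleton_self iv)]
        · intro ω ω' hagree
          exact ind_Yv_agree ha hab hu1 hu2 hagree
      rw [hfac, Ex_coord, ih u hult hu1 hu2, hqv]
      ring
    · -- no parent
      have hqv : qv a b p v = p := by
        rw [qv, dif_neg (by tauto)]
      have hident : ∀ ω : Fin n → Bool, ind n (Yv a b n v) ω
          = if ω iv = true then (1:ℝ) else 0 := by
        intro ω
        have hrun : runLen a b (randSet n ω) v = 1 := runLen_no_guard (by tauto)
        rw [ind]
        by_cases h1 : ω iv = true
        · rw [if_pos, if_pos h1]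
          exact ⟨(hmemv ω).mpr h1, by rw [hrun]; exact odd_one⟩
        · rw [if_neg, if_neg h1]
          intro hmem
          exact h1 ((hmemv ω).mp hmem.1)
      rw [Ex_congr hident, Ex_coord, hqv]

section SumQ

lemma qv_bounds {a b : ℕ} {p : ℝ} (hp0 : 0 ≤ p) (hp1 : p ≤ 1) (v : ℕ) :
    0 ≤ qv a b p v ∧ qv a b p v ≤ p := by
  induction v using Nat.strong_induction_on with
  | _ v ih =>
    rw [qv]
    split
    · rename_i h
      have hlt := par_lt h.1 h.2.1 h.2.2.1 h.2.2.2
      obtain ⟨h1, h2⟩ := ih _ hlt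
      constructor
      · apply mul_nonneg hp0; linarith
      · nlinarith
    · exact ⟨hp0, le_refl p⟩

lemma sumq {a b : ℕ} (ha : 0 < a) (hab : a < b) (hco : Nat.Coprime a b)
    {p : ℝ} (hp0 : 0 < p) (hp1 : p < 1) :
    ∀ m : ℕ, ∀ i : ℕ,
      |(∑ j ∈ Finset.Icc 1 m, qv a b p (a ^ i * j)) - p * b * m / (b + p)| ≤ p / (1 - p) := by
  have hb0 : 0 < b := lt_trans ha hab
  have hb1 : 1 < b := lt_of_le_of_lt ha hab
  have hbR : (0:ℝ) < b := by exact_mod_cast hb0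
  have hbp : (0:ℝ) < b + p := by linarith
  have h1p : (0:ℝ) < 1 - p := by linarith
  have hD0 : 0 ≤ p / (1 - p) := div_nonneg hp0.le h1p.le
  intro m
  induction m using Nat.strong_induction_on with
  | _ m ih =>
    intro i
    rcases Nat.eq_zero_or_pos m with hm | hm
    · subst hm; simpa using hD0
    · -- term-wise unfolding of qv
      have hterm : ∀ j ∈ Finset.Icc 1 m, qv a b p (a ^ i * j)
          = p - (if b ∣ j then p * qv a b p (a ^ (i+1) * (j / b)) else 0) := by
        intro j hj
        have hj1 : 1 ≤ j := (Finset.mem_Icc.mp hj).1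
        by_cases hbj : b ∣ j
        · have hv0 : 0 < a ^ i * j := Nat.mul_pos (Nat.pow_pos ha) hj1
          have hdvd : b ∣ a ^ i * j := Dvd.dvd.mul_left hbj _
          rw [qv, dif_pos ⟨hv0, hdvd, ha, hab⟩, if_pos hbj]
          have hpar : a * (a ^ i * j) / b = a ^ (i+1) * (j / b) := by
            obtain ⟨k, rfl⟩ := hbj
            rw [Nat.mul_div_cancel_left k hb0]
            have : a * (a ^ i * (b * k)) = a ^ (i+1) * k * b := by ring
            rw [this, Nat.mul_div_cancel _ hb0]
          rw [hpar]; ring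
        · have hndvd : ¬ b ∣ a ^ i * j := by
            intro hdvd
            exact hbj ((Nat.Coprime.pow_right i hco.symm).dvd_of_dvd_mul_left hdvd)
          rw [qv, dif_neg (by tauto), if_neg hbj]; ring
      have hreindex : (∑ j ∈ (Finset.Icc 1 m).filter (fun j => b ∣ j),
            qv a b p (a ^ (i+1) * (j / b)))
          = ∑ k ∈ Finset.Icc 1 (m / b), qv a b p (a ^ (i+1) * k) := by
        refine Finset.sum_nbij' (i := fun j => j / b) (j := fun k => b * k)
          ?_ ?_ ?_ ?_ ?_
        · intro j hj
          rw [Finset.mem_filter, Finset.mem_Icc] at hj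
          rw [Finset.mem_Icc]
          obtain ⟨⟨hj1, hjm⟩, hbj⟩ := hj
          constructor
          · exact Nat.one_le_div_iff hb0 |>.mpr (Nat.le_of_dvd hj1 hbj)
          · exact Nat.div_le_div_right hjm
        · intro k hk
          rw [Finset.mem_Icc] at hk
          rw [Finset.mem_filter, Finset.mem_Icc]
          refine ⟨⟨?_, ?_⟩, Dvd.intro k rfl⟩
          · calc 1 ≤ k := hk.1
              _ ≤ b * k := Nat.le_mul_of_pos_left k hb0
          · calc b * k ≤ b * (m / b) := Nat.mul_le_mul_left b hk.2
              _ ≤ m := Nat.mul_div_le m b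
        · intro j hj
          rw [Finset.mem_filter] at hj
          exact Nat.mul_div_cancel' hj.2
        · intro k hk
          exact Nat.mul_div_cancel_left k hb0
        · intro j _
          rfl
      have hsum : (∑ j ∈ Finset.Icc 1 m, qv a b p (a ^ i * j))
          = p * m - p * (∑ k ∈ Finset.Icc 1 (m / b), qv a b p (a ^ (i+1) * k)) := by
        rw [Finset.sum_congr rfl hterm, Finset.sum_sub_distrib]
        congr 1
        · rw [Finset.sum_const, Nat.card_Icc]
          have hmm : m + 1 - 1 = m := by omega
          rw [hmm, nsmul_eq_mul, mul_comm]
        · rw [← Finset.sum_filter, ← hreindex, Finset.mul_sum]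
      -- apply IH
      have hmb : m / b < m := Nat.div_lt_self hm hb1
      have IH := ih (m / b) hmb (i + 1)
      set S' := ∑ k ∈ Finset.Icc 1 (m / b), qv a b p (a ^ (i+1) * k) with hS'
      set E := S' - p * b * (m / b : ℕ) / (b + p) with hE
      -- floor error
      have hfloor : (m : ℝ) = b * ((m / b : ℕ) : ℝ) + ((m % b : ℕ) : ℝ) := by
        have h := Nat.div_add_mod m b
        have h' : ((b * (m / b) + m % b : ℕ) : ℝ) = (m : ℝ) := by exact_mod_cast congrArg Nat.cast h
        push_cast at h'
        linarith
      have hrem : ((m % b : ℕ) : ℝ) ≤ (b : ℝ) - 1 := by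
        have h2 : (m % b) + 1 ≤ b := Nat.mod_lt m hb0
        have h3 := (Nat.cast_le (α := ℝ)).mpr h2
        push_cast at h3
        linarith
      have hrem0 : (0:ℝ) ≤ ((m % b : ℕ) : ℝ) := Nat.cast_nonneg _
      rw [hsum]
      have key : p * (m:ℝ) - p * S' - p * (b:ℝ) * (m:ℝ) / ((b:ℝ) + p)
          = -p * E + p^2 * ((m % b : ℕ) : ℝ) / ((b:ℝ) + p) := by
        rw [hE, hfloor]
        field_simp
        ring
      rw [key]
      have habs : |(-p * E + p^2 * ((m % b : ℕ) : ℝ) / ((b:ℝ) + p))|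
          ≤ p * |E| + p^2 * ((m % b : ℕ) : ℝ) / ((b:ℝ) + p) := by
        calc |(-p * E + p^2 * ((m % b : ℕ) : ℝ) / ((b:ℝ) + p))|
            ≤ |(-p * E)| + |p^2 * ((m % b : ℕ) : ℝ) / ((b:ℝ) + p)| := abs_add_le _ _
          _ = p * |E| + p^2 * ((m % b : ℕ) : ℝ) / ((b:ℝ) + p) := by
              rw [abs_mul, abs_neg, abs_of_pos hp0,
                abs_of_nonneg (div_nonneg (mul_nonneg (sq_nonneg p) hrem0) hbp.le)]
      refine le_trans habs ?_
      have hEb : p * |E| ≤ p * (p / (1 - p)) := mul_le_mul_of_nonneg_left IH hp0.le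
      have h2 : p^2 * ((m % b : ℕ) : ℝ) / ((b:ℝ) + p) ≤ p^2 * ((b:ℝ) - 1) / ((b:ℝ) + p) := by
        gcongr
      have h3 : p^2 * ((b:ℝ) - 1) / ((b:ℝ) + p) ≤ p^2 := by
        rw [div_le_iff₀ hbp]
        nlinarith [sq_nonneg p]
      have h4 : p / (1 - p) - (p * (p / (1 - p)) + p^2) = p * (1 - p) := by
        field_simp
        ring
      have h5 : (0:ℝ) ≤ p * (1 - p) := mul_nonneg hp0.le h1p.le
      linarith

end SumQ

section Var
variable {n : ℕ} {p : ℝ}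

lemma Ex_add (f g : (Fin n → Bool) → ℝ) :
    Ex n p (fun ω => f ω + g ω) = Ex n p f + Ex n p g := by
  rw [Ex, Ex, Ex, ← Finset.sum_add_distrib]
  exact Finset.sum_congr rfl fun ω _ => by ring

lemma Ex_const_mul (c : ℝ) (f : (Fin n → Bool) → ℝ) :
    Ex n p (fun ω => c * f ω) = c * Ex n p f := by
  rw [Ex, Ex, Finset.mul_sum]
  exact Finset.sum_congr rfl fun ω _ => by ring

lemma Ex_const (c : ℝ) : Ex n p (fun _ => c) = c := by
  rw [Ex, ← Finset.sum_mul, sum_wgt, one_mul]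

/-- Covariance expansion. -/
lemma Ex_cov (f g : (Fin n → Bool) → ℝ) (qf qg : ℝ) (hf : Ex n p f = qf) (hg : Ex n p g = qg) :
    Ex n p (fun ω => (f ω - qf) * (g ω - qg)) = Ex n p (fun ω => f ω * g ω) - qf * qg := by
  have h : ∀ ω : Fin n → Bool, (f ω - qf) * (g ω - qg)
      = f ω * g ω + ((-qf) * g ω + ((-qg) * f ω + qf * qg)) := fun ω => by ring
  rw [Ex_congr h, Ex_add, Ex_add, Ex_add, Ex_const_mul, Ex_const_mul, Ex_const, hf, hg]
  ring

/-- Chebyshev, in summed form. -/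
lemma cheb (hp0 : 0 ≤ p) (hp1 : p ≤ 1) (f : (Fin n → Bool) → ℝ) (t : ℝ) (ht : 0 < t) :
    Ex n p (ind n {ω | t ≤ |f ω|}) ≤ Ex n p (fun ω => (f ω)^2) / t^2 := by
  have hmono : ∀ ω : Fin n → Bool, ind n {ω | t ≤ |f ω|} ω ≤ (f ω)^2 / t^2 := by
    intro ω
    rw [ind]
    split
    · rename_i h
      rw [Set.mem_setOf_eq] at h
      rw [le_div_iff₀ (by positivity), one_mul]
      calc t^2 ≤ |f ω|^2 := by
            apply sq_le_sq' <;> nlinarith [abs_nonneg (f ω)]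
        _ = (f ω)^2 := sq_abs _
    · positivity
  calc Ex n p (ind n {ω | t ≤ |f ω|}) ≤ Ex n p (fun ω => (f ω)^2 / t^2) :=
        Ex_mono hp0 hp1 hmono
    _ = Ex n p (fun ω => (t^2)⁻¹ * (f ω)^2) := Ex_congr fun ω => by
          rw [div_eq_mul_inv]; ring
    _ = Ex n p (fun ω => (f ω)^2) / t^2 := by
        rw [Ex_const_mul, div_eq_mul_inv]; ring

lemma pr_mono (hp0 : 0 ≤ p) (hp1 : p ≤ 1) {E F : Set (Fin n → Bool)} (h : E ⊆ F) :
    Ex n p (ind n E) ≤ Ex n p (ind n F) := by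
  apply Ex_mono hp0 hp1
  intro ω
  rw [ind, ind]
  by_cases hE : ω ∈ E
  · rw [if_pos hE, if_pos (h hE)]
  · rw [if_neg hE]; split <;> norm_num

end Var

section Count
variable {a b n : ℕ}

lemma j_le_log (ha : 0 < a) (hab : a < b) (hco : Nat.Coprime a b) {v w j : ℕ}
    (hv0 : 0 < v) (hvn : v ≤ n) (hw0 : 0 < w) (hwv : w ≤ v)
    (hj : v * a ^ j = w * b ^ j) : j ≤ Nat.log 2 n := by
  have hb2 : 2 ≤ b := by omega
  have h2j : 2 ^ j ≤ n := by
    rcases Nat.lt_or_ge a 2 with h1 | h2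
    · have ha1 : a = 1 := by omega
      subst ha1
      rw [one_pow, mul_one] at hj
      calc 2 ^ j ≤ b ^ j := Nat.pow_le_pow_left hb2 j
        _ ≤ w * b ^ j := Nat.le_mul_of_pos_left _ hw0
        _ = v := hj.symm
        _ ≤ n := hvn
    · have hdvd : a ^ j ∣ w * b ^ j := by
        rw [← hj]; exact Dvd.dvd.mul_left dvd_rfl v
      have hcop : Nat.Coprime (a ^ j) (b ^ j) := Nat.Coprime.pow j j hco
      have hdw : a ^ j ∣ w := hcop.dvd_of_dvd_mul_right hdvd
      calc 2 ^ j ≤ a ^ j := Nat.pow_le_pow_left h2 j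
        _ ≤ w := Nat.le_of_dvd hw0 hdw
        _ ≤ n := le_trans hwv hvn
  exact Nat.le_log_of_pow_le one_lt_two h2j

lemma card_anc_le (ha : 0 < a) (hab : a < b) (hco : Nat.Coprime a b)
    {u : ℕ} (hu0 : 0 < u) (hun : u ≤ n) :
    (anc a b u).card ≤ Nat.log 2 n + 1 := by
  classical
  have hcard := Finset.card_le_card_of_injOn
    (f := fun w => if h : ∃ j, u * a ^ j = w * b ^ j then h.choose else 0)
    (s := anc a b u) (t := Finset.range (Nat.log 2 n + 1)) ?_ ?_
  · simpa using hcard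
  · intro w hw
    have hex : ∃ j, u * a ^ j = w * b ^ j := mem_anc_exists ha hab hu0 hw
    simp only [dif_pos hex, Finset.mem_coe, Finset.mem_range, Nat.lt_add_one_iff]
    exact j_le_log ha hab hco hu0 hun (mem_anc_pos hu0 hw)
      (mem_anc_le hw) hex.choose_spec
  · intro w1 hw1 w2 hw2 heq
    simp only [Finset.mem_coe] at hw1 hw2
    have hex1 : ∃ j, u * a ^ j = w1 * b ^ j := mem_anc_exists ha hab hu0 hw1
    have hex2 : ∃ j, u * a ^ j = w2 * b ^ j := mem_anc_exists ha hab hu0 hw2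
    simp only [dif_pos hex1, dif_pos hex2] at heq
    have h1 := hex1.choose_spec
    have h2 := hex2.choose_spec
    rw [heq] at h1
    have hbpos : 0 < b ^ hex2.choose := Nat.pow_pos (by omega)
    exact Nat.eq_of_mul_eq_mul_right hbpos (h1.symm.trans h2)

lemma card_bad_le (ha : 0 < a) (hab : a < b) (hco : Nat.Coprime a b)
    {u : ℕ} (hu0 : 0 < u) (hun : u ≤ n) :
    ((Finset.Icc 1 n).filter fun v => ¬ Disjoint (anc a b u) (anc a b v)).card
      ≤ (Nat.log 2 n + 1)^2 := by
  classical
  have hcard := Finset.card_le_card_of_injOn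
    (f := fun v => if h : ∃ z : ℕ × ℕ, z.1 ∈ anc a b u ∧ v * a ^ z.2 = z.1 * b ^ z.2
      then h.choose else (0, 0))
    (s := (Finset.Icc 1 n).filter fun v => ¬ Disjoint (anc a b u) (anc a b v))
    (t := (anc a b u) ×ˢ (Finset.range (Nat.log 2 n + 1))) ?_ ?_
  · calc ((Finset.Icc 1 n).filter fun v => ¬ Disjoint (anc a b u) (anc a b v)).card
        ≤ ((anc a b u) ×ˢ (Finset.range (Nat.log 2 n + 1))).card := hcard
      _ = (anc a b u).card * (Nat.log 2 n + 1) := by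
          rw [Finset.card_product, Finset.card_range]
      _ ≤ (Nat.log 2 n + 1) * (Nat.log 2 n + 1) :=
          Nat.mul_le_mul_right _ (card_anc_le ha hab hco hu0 hun)
      _ = (Nat.log 2 n + 1)^2 := (sq _).symm
  · intro v hv
    rw [Finset.mem_coe, Finset.mem_filter, Finset.mem_Icc] at hv
    obtain ⟨⟨hv1, hv2⟩, hnd⟩ := hv
    obtain ⟨w, hwu, hwv⟩ := Finset.not_disjoint_iff.mp hnd
    obtain ⟨j, hj⟩ := mem_anc_exists ha hab hv1 hwv
    have hex : ∃ z : ℕ × ℕ, z.1 ∈ anc a b u ∧ v * a ^ z.2 = z.1 * b ^ z.2 := ⟨(w, j), hwu, hj⟩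
    simp only [dif_pos hex, Finset.mem_coe, Finset.mem_product, Finset.mem_range, Nat.lt_add_one_iff]
    obtain ⟨hw'u, hj'⟩ := hex.choose_spec
    refine ⟨hw'u, ?_⟩
    have hw'0 : 0 < hex.choose.1 := by
      rcases Nat.eq_zero_or_pos hex.choose.1 with h0 | h0
      · exfalso
        rw [h0, zero_mul] at hj'
        have := Nat.mul_pos hv1 (Nat.pow_pos (n := hex.choose.2) ha)
        omega
      · exact h0
    have hw'v : hex.choose.1 ≤ v := by
      have hle : hex.choose.1 * b ^ hex.choose.2 ≤ v * b ^ hex.choose.2 := by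
        rw [← hj']
        exact Nat.mul_le_mul_left v (Nat.pow_le_pow_left (le_of_lt hab) _)
      exact Nat.le_of_mul_le_mul_right hle (Nat.pow_pos (by omega))
    exact j_le_log ha hab hco hv1 hv2 hw'0 hw'v hj'
  · intro v1 hv1 v2 hv2 heq
    simp only [Finset.coe_filter, Set.mem_setOf_eq, Finset.mem_Icc] at hv1 hv2
    obtain ⟨⟨hv11, hv12⟩, hnd1⟩ := hv1
    obtain ⟨⟨hv21, hv22⟩, hnd2⟩ := hv2
    obtain ⟨w1, hw1u, hw1v⟩ := Finset.not_disjoint_iff.mp hnd1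
    obtain ⟨j1, hj1⟩ := mem_anc_exists ha hab hv11 hw1v
    obtain ⟨w2, hw2u, hw2v⟩ := Finset.not_disjoint_iff.mp hnd2
    obtain ⟨j2, hj2⟩ := mem_anc_exists ha hab hv21 hw2v
    have hex1 : ∃ z : ℕ × ℕ, z.1 ∈ anc a b u ∧ v1 * a ^ z.2 = z.1 * b ^ z.2 := ⟨(w1, j1), hw1u, hj1⟩
    have hex2 : ∃ z : ℕ × ℕ, z.1 ∈ anc a b u ∧ v2 * a ^ z.2 = z.1 * b ^ z.2 := ⟨(w2, j2), hw2u, hj2⟩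
    simp only [dif_pos hex1, dif_pos hex2] at heq
    have hs1 := hex1.choose_spec.2
    have hs2 := hex2.choose_spec.2
    rw [heq] at hs1
    have hapos : 0 < a ^ hex2.choose.2 := Nat.pow_pos ha
    exact Nat.eq_of_mul_eq_mul_right hapos (hs1.trans hs2.symm)

end Count

section VarBound
variable {a b n : ℕ} {p : ℝ}

lemma cov_le (ha : 0 < a) (hab : a < b) (hp0 : 0 ≤ p) (hp1 : p ≤ 1)
    {u v : ℕ} (hu1 : 1 ≤ u) (hu2 : u ≤ n) (hv1 : 1 ≤ v) (hv2 : v ≤ n) :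
    Ex n p (fun ω => ind n (Yv a b n u) ω * ind n (Yv a b n v) ω) - qv a b p u * qv a b p v
      ≤ if Disjoint (anc a b u) (anc a b v) then 0 else 1 := by
  split
  · rename_i hdisj
    have hfac : Ex n p (fun ω => ind n (Yv a b n u) ω * ind n (Yv a b n v) ω)
        = Ex n p (ind n (Yv a b n u)) * Ex n p (ind n (Yv a b n v)) := by
      apply factor n (Finset.univ.filter (fun i : Fin n => (i : ℕ) + 1 ∈ anc a b u))
        (Finset.univ.filter (fun i : Fin n => (i : ℕ) + 1 ∈ anc a b v))
      · rw [Finset.disjoint_left]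
        intro i hi hj
        rw [Finset.mem_filter] at hi hj
        exact (Finset.disjoint_left.mp hdisj hi.2) hj.2
      · intro ω ω' hagree
        exact ind_Yv_agree ha hab hu1 hu2 hagree
      · intro ω ω' hagree
        exact ind_Yv_agree ha hab hv1 hv2 hagree
    rw [hfac, Ex_ind_Yv ha hab hp0 hp1 u hu1 hu2, Ex_ind_Yv ha hab hp0 hp1 v hv1 hv2]
    simp
  · have h1 : Ex n p (fun ω => ind n (Yv a b n u) ω * ind n (Yv a b n v) ω) ≤ 1 := by
      calc Ex n p (fun ω => ind n (Yv a b n u) ω * ind n (Yv a b n v) ω)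
          ≤ Ex n p (fun _ => 1) := by
            apply Ex_mono hp0 hp1
            intro ω
            rw [ind, ind]
            split <;> split <;> norm_num
        _ = 1 := Ex_const 1
    have h2 : 0 ≤ qv a b p u * qv a b p v :=
      mul_nonneg (qv_bounds hp0 hp1 u).1 (qv_bounds hp0 hp1 v).1
    linarith

lemma var_le (ha : 0 < a) (hab : a < b) (hco : Nat.Coprime a b)
    (hp0 : 0 ≤ p) (hp1 : p ≤ 1) :
    Ex n p (fun ω => ((∑ v ∈ Finset.Icc 1 n, ind n (Yv a b n v) ω)
        - ∑ v ∈ Finset.Icc 1 n, qv a b p v)^2)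
      ≤ (n : ℝ) * ((Nat.log 2 n : ℝ) + 1)^2 := by
  have hsq : ∀ ω : Fin n → Bool,
      ((∑ v ∈ Finset.Icc 1 n, ind n (Yv a b n v) ω) - ∑ v ∈ Finset.Icc 1 n, qv a b p v)^2
        = ∑ u ∈ Finset.Icc 1 n, ∑ v ∈ Finset.Icc 1 n,
            (ind n (Yv a b n u) ω - qv a b p u) * (ind n (Yv a b n v) ω - qv a b p v) := by
    intro ω
    rw [← Finset.sum_sub_distrib, sq, Finset.sum_mul_sum]
  rw [Ex_congr hsq, Ex_sum]
  have hswap : ∀ u ∈ Finset.Icc 1 n,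
      Ex n p (fun ω => ∑ v ∈ Finset.Icc 1 n,
          (ind n (Yv a b n u) ω - qv a b p u) * (ind n (Yv a b n v) ω - qv a b p v))
        = ∑ v ∈ Finset.Icc 1 n, Ex n p (fun ω =>
            (ind n (Yv a b n u) ω - qv a b p u) * (ind n (Yv a b n v) ω - qv a b p v)) :=
    fun u _ => Ex_sum _ _
  rw [Finset.sum_congr rfl hswap]
  have hbound : ∀ u ∈ Finset.Icc 1 n,
      (∑ v ∈ Finset.Icc 1 n, Ex n p (fun ω =>
          (ind n (Yv a b n u) ω - qv a b p u) * (ind n (Yv a b n v) ω - qv a b p v)))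
        ≤ ((Nat.log 2 n : ℝ) + 1)^2 := by
    intro u hu
    rw [Finset.mem_Icc] at hu
    have step1 : ∀ v ∈ Finset.Icc 1 n,
        Ex n p (fun ω =>
            (ind n (Yv a b n u) ω - qv a b p u) * (ind n (Yv a b n v) ω - qv a b p v))
          ≤ (if Disjoint (anc a b u) (anc a b v) then (0:ℝ) else 1) := by
      intro v hv
      rw [Finset.mem_Icc] at hv
      rw [Ex_cov _ _ _ _ (Ex_ind_Yv ha hab hp0 hp1 u hu.1 hu.2)
        (Ex_ind_Yv ha hab hp0 hp1 v hv.1 hv.2)]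
      exact cov_le ha hab hp0 hp1 hu.1 hu.2 hv.1 hv.2
    calc (∑ v ∈ Finset.Icc 1 n, Ex n p (fun ω =>
          (ind n (Yv a b n u) ω - qv a b p u) * (ind n (Yv a b n v) ω - qv a b p v)))
        ≤ ∑ v ∈ Finset.Icc 1 n, (if Disjoint (anc a b u) (anc a b v) then (0:ℝ) else 1) :=
          Finset.sum_le_sum step1
      _ = ∑ v ∈ Finset.Icc 1 n, (if ¬ Disjoint (anc a b u) (anc a b v) then (1:ℝ) else 0) := by
          apply Finset.sum_congr rfl
          intro v _
          by_cases h : Disjoint (anc a b u) (anc a b v) <;> simp [h]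
      _ = (((Finset.Icc 1 n).filter fun v => ¬ Disjoint (anc a b u) (anc a b v)).card : ℝ) := by
          rw [Finset.sum_boole]
      _ ≤ (((Nat.log 2 n + 1)^2 : ℕ) : ℝ) := by
          exact_mod_cast card_bad_le ha hab hco hu.1 hu.2
      _ = ((Nat.log 2 n : ℝ) + 1)^2 := by push_cast; ring
  calc (∑ u ∈ Finset.Icc 1 n, ∑ v ∈ Finset.Icc 1 n, Ex n p (fun ω =>
        (ind n (Yv a b n u) ω - qv a b p u) * (ind n (Yv a b n v) ω - qv a b p v)))
      ≤ ∑ _u ∈ Finset.Icc 1 n, ((Nat.log 2 n : ℝ) + 1)^2 := Finset.sum_le_sum hbound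
    _ = (n : ℝ) * ((Nat.log 2 n : ℝ) + 1)^2 := by
        rw [Finset.sum_const, Nat.card_Icc]
        have : n + 1 - 1 = n := by omega
        rw [this, nsmul_eq_mul]

end VarBound

section Final
variable {a b : ℕ} {p : ℝ}

lemma X_eq (ha : 0 < a) (hab : a < b) (hco : Nat.Coprime a b) (n : ℕ) (ω : Fin n → Bool) :
    ((maxMulFree a b (randSet n ω) : ℕ) : ℝ)
      = ∑ v ∈ Finset.Icc 1 n, ind n (Yv a b n v) ω := by
  have hpos : ∀ v ∈ randSet n ω, 0 < v := fun v hv => (mem_randSet_le hv).1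
  rw [maxMulFree_eq ha hab hco _ hpos]
  have hfilter : (randSet n ω).filter (fun v => Odd (runLen a b (randSet n ω) v))
      = (Finset.Icc 1 n).filter
          (fun v => v ∈ randSet n ω ∧ Odd (runLen a b (randSet n ω) v)) := by
    ext v
    simp only [Finset.mem_filter, Finset.mem_Icc]
    constructor
    · rintro ⟨h1, h2⟩
      have := mem_randSet_le h1
      exact ⟨⟨this.1, this.2⟩, h1, h2⟩
    · tauto
  rw [hfilter, Finset.card_filter]
  push_cast
  apply Finset.sum_congr rfl
  intro v _
  by_cases h : v ∈ randSet n ω ∧ Odd (runLen a b (randSet n ω) v)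
  · rw [if_pos h, ind, if_pos (show ω ∈ Yv a b n v from h)]
  · rw [if_neg h, ind, if_neg (show ω ∉ Yv a b n v from h)]

theorem stmt10' (ha : 0 < a) (hab : a < b) (hco : Nat.Coprime a b)
    (hp0 : 0 < p) (hp1 : p < 1) :
    Filter.Tendsto (fun n : ℕ => randMeasure n p {ω |
        |(maxMulFree a b (randSet n ω) : ℝ) - ((b : ℝ) / (b + p)) * p * n|
          ≤ 1 * Real.sqrt (p * n) * Real.log n * Real.log (Real.log n)})
      Filter.atTop (nhds 1) := by
  have h1p : (0:ℝ) < 1 - p := by linarith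
  set D : ℝ := p / (1 - p) with hD
  have hD0 : 0 < D := by positivity
  set G : (n : ℕ) → Set (Fin n → Bool) := fun n => {ω |
      |(maxMulFree a b (randSet n ω) : ℝ) - ((b : ℝ) / (b + p)) * p * n|
        ≤ 1 * Real.sqrt (p * n) * Real.log n * Real.log (Real.log n)} with hG
  -- probabilities as real sums
  have hmeas : ∀ n : ℕ, randMeasure n p (G n) = ENNReal.ofReal (Ex n p (ind n (G n))) :=
    fun n => randMeasure_apply n hp0.le hp1.le (G n)
  have hsplit : ∀ n : ℕ, Ex n p (ind n (G n)) = 1 - Ex n p (ind n (G n)ᶜ) := by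
    intro n
    have hpt : ∀ ω : Fin n → Bool, ind n (G n) ω + ind n (G n)ᶜ ω = 1 := by
      intro ω
      rw [ind, ind]
      by_cases h : ω ∈ G n
      · rw [if_pos h, if_neg (by simp [h])]; ring
      · rw [if_neg h, if_pos (by simp [h])]; ring
    have := (Ex_add (n := n) (p := p) (ind n (G n)) (ind n (G n)ᶜ)).symm.trans
      ((Ex_congr hpt).trans (Ex_const 1))
    linarith
  -- the complement probability bound, eventually
  set γ : ℕ → ℝ := fun n => 36 / p * ((Real.log (Real.log n))^2)⁻¹ with hγ
  have hBbound : ∀ᶠ n : ℕ in Filter.atTop, Ex n p (ind n (G n)ᶜ) ≤ γ n := by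
    have ev1 : ∀ᶠ n : ℕ in Filter.atTop, (1:ℝ) ≤ Real.log n := by
      have := Real.tendsto_log_atTop.comp (tendsto_natCast_atTop_atTop (R := ℝ))
      exact this.eventually_ge_atTop 1
    have ev2 : ∀ᶠ n : ℕ in Filter.atTop, (1:ℝ) ≤ Real.log (Real.log n) := by
      have := Real.tendsto_log_atTop.comp
        (Real.tendsto_log_atTop.comp (tendsto_natCast_atTop_atTop (R := ℝ)))
      exact this.eventually_ge_atTop 1
    have ev3 : ∀ᶠ n : ℕ in Filter.atTop, 4 * D^2 / p ≤ (n:ℝ) := by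
      exact (tendsto_natCast_atTop_atTop (R := ℝ)).eventually_ge_atTop _
    have ev4 : ∀ᶠ n : ℕ in Filter.atTop, 1 ≤ n := Filter.eventually_ge_atTop 1
    filter_upwards [ev1, ev2, ev3, ev4] with n hl hll hn4 hn1
    set L : ℝ := (Nat.log 2 n : ℝ) with hL
    set T : ℝ := Real.sqrt (p * n) * Real.log n * Real.log (Real.log n) with hT
    have hnR : (1:ℝ) ≤ (n:ℝ) := by exact_mod_cast hn1
    have hpn : 0 < p * n := by positivity
    -- sqrt bound
    have hsq : 2 * D ≤ Real.sqrt (p * n) := by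
      have h1 : 4 * D^2 ≤ p * n := by
        rw [div_le_iff₀ hp0] at hn4
        nlinarith
      have h2 : Real.sqrt (4 * D^2) ≤ Real.sqrt (p * n) := Real.sqrt_le_sqrt h1
      have h3 : Real.sqrt (4 * D^2) = 2 * D := by
        rw [show 4 * D^2 = (2*D)^2 by ring]
        exact Real.sqrt_sq (by positivity)
      linarith
    have hT2D : 2 * D ≤ T := by
      calc 2 * D ≤ Real.sqrt (p * n) := hsq
        _ ≤ Real.sqrt (p * n) * (Real.log n * Real.log (Real.log n)) := by
            apply le_mul_of_one_le_right (Real.sqrt_nonneg _)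
            nlinarith
        _ = T := by rw [hT]; ring
    have hT0 : 0 < T := by
      have : 0 < Real.sqrt (p * n) := Real.sqrt_pos.mpr hpn
      rw [hT]; positivity
    set t : ℝ := T - D with ht
    have htpos : T / 2 ≤ t := by rw [ht]; linarith
    have ht0 : 0 < t := by linarith
    -- expectation of X
    set EXq : ℝ := ∑ v ∈ Finset.Icc 1 n, qv a b p v with hEXq
    have hEXbound : |EXq - p * b * n / (b + p)| ≤ D := by
      have := sumq ha hab hco hp0 hp1 n 0
      have heq : (∑ j ∈ Finset.Icc 1 n, qv a b p (a ^ 0 * j)) = EXq := by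
        apply Finset.sum_congr rfl
        intro j _
        rw [pow_zero, one_mul]
      rwa [heq] at this
    -- event inclusion
    have hMeq : ((b : ℝ) / (b + p)) * p * n = p * b * n / (b + p) := by ring
    have hsub : (G n)ᶜ ⊆ {ω : Fin n → Bool |
        t ≤ |(∑ v ∈ Finset.Icc 1 n, ind n (Yv a b n v) ω) - EXq|} := by
      intro ω hω
      rw [Set.mem_compl_iff, hG, Set.mem_setOf_eq, not_le] at hω
      rw [Set.mem_setOf_eq, ← X_eq ha hab hco n ω]
      have htri : |(maxMulFree a b (randSet n ω) : ℝ) - ((b : ℝ) / (b + p)) * p * n|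
          ≤ |(maxMulFree a b (randSet n ω) : ℝ) - EXq| + |EXq - ((b : ℝ) / (b + p)) * p * n| := by
        have : (maxMulFree a b (randSet n ω) : ℝ) - ((b : ℝ) / (b + p)) * p * n
            = ((maxMulFree a b (randSet n ω) : ℝ) - EXq) + (EXq - ((b : ℝ) / (b + p)) * p * n) := by
          ring
        rw [this]
        exact abs_add_le _ _
      have h2 : |EXq - ((b : ℝ) / (b + p)) * p * n| ≤ D := by rw [hMeq]; exact hEXbound
      have h3 : 1 * Real.sqrt (p * n) * Real.log n * Real.log (Real.log n) = T := by
        rw [hT]; ring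
      rw [h3] at hω
      rw [ht]
      linarith
    -- chain of bounds
    calc Ex n p (ind n (G n)ᶜ)
        ≤ Ex n p (ind n {ω : Fin n → Bool |
            t ≤ |(∑ v ∈ Finset.Icc 1 n, ind n (Yv a b n v) ω) - EXq|}) :=
          pr_mono hp0.le hp1.le hsub
      _ ≤ Ex n p (fun ω => ((∑ v ∈ Finset.Icc 1 n, ind n (Yv a b n v) ω) - EXq)^2) / t^2 :=
          cheb hp0.le hp1.le _ t ht0
      _ ≤ ((n : ℝ) * (L + 1)^2) / t^2 := by
          gcongr
          exact var_le ha hab hco hp0.le hp1.le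
      _ ≤ ((n : ℝ) * (3 * Real.log n)^2) / (T/2)^2 := by
          have hL3 : L + 1 ≤ 3 * Real.log n := by
            have h1 : L ≤ Real.logb 2 (n : ℝ) := by
              rw [hL]
              exact_mod_cast Real.natLog_le_logb n 2
            have h2 : Real.logb 2 (n : ℝ) = Real.log n / Real.log 2 := by
              rw [Real.logb]
            have hlog2 : (0.5 : ℝ) ≤ Real.log 2 := by
              have := Real.log_two_gt_d9
              linarith
            have h3 : Real.log (n:ℝ) / Real.log 2 ≤ Real.log (n:ℝ) / 0.5 :=
              div_le_div_of_nonneg_left (by linarith) (by norm_num) hlog2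
            have h4 : Real.log (n:ℝ) / 0.5 = 2 * Real.log n := by ring
            rw [h2] at h1
            rw [h4] at h3
            linarith
          apply div_le_div₀ (by positivity) ?_ (by positivity) ?_
          · apply mul_le_mul_of_nonneg_left _ (Nat.cast_nonneg n)
            apply pow_le_pow_left₀ _ hL3 2
            have hL0 : (0:ℝ) ≤ L := Nat.cast_nonneg _
            linarith
          · apply pow_le_pow_left₀ (by linarith) htpos 2
      _ = γ n := by
          have hl0 : Real.log (n:ℝ) ≠ 0 := by linarith
          have hll0 : Real.log (Real.log (n:ℝ)) ≠ 0 := by linarith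
          have hn0 : (n:ℝ) ≠ 0 := by linarith
          have hT2 : T^2 = (p * n) * (Real.log n)^2 * (Real.log (Real.log n))^2 := by
            rw [hT, mul_pow, mul_pow, Real.sq_sqrt hpn.le]
          have hhalf : (T/2)^2 = ((p * n) * (Real.log n)^2 * (Real.log (Real.log n))^2) / 4 := by
            rw [← hT2]; ring
          rw [hhalf, hγ]
          field_simp
          ring
  -- final limit assembly
  have hγ0 : Filter.Tendsto γ Filter.atTop (nhds 0) := by
    have h1 : Filter.Tendsto (fun n : ℕ => Real.log (Real.log n)) Filter.atTop Filter.atTop :=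
      Real.tendsto_log_atTop.comp
        (Real.tendsto_log_atTop.comp (tendsto_natCast_atTop_atTop (R := ℝ)))
    have h2 : Filter.Tendsto (fun n : ℕ => (Real.log (Real.log n))^2) Filter.atTop
        Filter.atTop := by
      have := h1.atTop_mul_atTop₀ h1
      apply this.congr
      intro n
      ring
    have h3 := h2.inv_tendsto_atTop
    have h4 := Filter.Tendsto.const_mul (36 / p) h3
    rw [mul_zero] at h4
    exact h4
  have hB0 : Filter.Tendsto (fun n : ℕ => Ex n p (ind n (G n)ᶜ)) Filter.atTop (nhds 0) := by
    apply tendsto_of_tendsto_of_tendsto_of_le_of_le' tendsto_const_nhds hγ0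
    · exact Filter.Eventually.of_forall fun n => Ex_ind_nonneg hp0.le hp1.le _
    · exact hBbound
  have hG1 : Filter.Tendsto (fun n : ℕ => Ex n p (ind n (G n))) Filter.atTop (nhds 1) := by
    have := (tendsto_const_nhds (x := (1:ℝ)) (f := Filter.atTop (α := ℕ))).sub hB0
    rw [sub_zero] at this
    apply this.congr
    intro n
    exact (hsplit n).symm
  have hcomp := (ENNReal.continuous_ofReal.tendsto 1).comp hG1
  rw [ENNReal.ofReal_one] at hcomp
  apply hcomp.congr
  intro n
  exact (hmeas n).symm

end Final

end ExLemmas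

/-- With high probability, the maximum size of a `(b/a)`-multiple-free subset of the
random set `[n]_p` equals `(b/(b+p))·p·n + O(√(pn)·log n·log log n)`. -/
theorem stmt10 (a b : ℕ) (ha : 0 < a) (hab : a < b) (hco : Nat.Coprime a b)
    (p : ℝ) (hp0 : 0 < p) (hp1 : p < 1) :
    ∃ C : ℝ, 0 < C ∧
      Filter.Tendsto (fun n : ℕ => randMeasure n p {ω |
          |(maxMulFree a b (randSet n ω) : ℝ) - ((b : ℝ) / (b + p)) * p * n|
            ≤ C * Real.sqrt (p * n) * Real.log n * Real.log (Real.log n)})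
        Filter.atTop (nhds 1) := by
  exact ⟨1, one_pos, stmt10' ha hab hco hp0 hp1⟩
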